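/- arXiv:1603.09471 — 3 statements merged into one kernel-verified Lean document; each statement's English description precedes it below -/
import Mathlib

section
/- Let 0 < α < 1, let λ ∈ ℝ with λ ≠ 1/(1-α), and let f : [0,∞) → ℝ be continuous with f(0) = 0. If u is continuously differentiable on [0,∞), satisfies u(0) = 0, and satisfies (_CF D₀ᵗ^α u)(t) − λ·u(t) = f(t) for all t ≥ 0, then u(t) = ((1-α)/(1-λ(1-α)))·f(t) + (α/(1-λ(1-α))²)·∫₀ᵗ f(ξ)·exp( (λα/(1-λ(1-α)))·(t-ξ) ) dξ for all t ≥ 0; in particular the solution of this initial value problem is unique. -/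
open intervalIntegral MeasureTheory

/-- The Caputo–Fabrizio fractional derivative of order `α` with base point `0`. -/
noncomputable def cfDeriv (α : ℝ) (u : ℝ → ℝ) (t : ℝ) : ℝ :=
  (1 / (1 - α)) * ∫ s in (0:ℝ)..t, deriv u s * Real.exp (-(α / (1 - α)) * (t - s))

private lemma ftc_aux (g : ℝ → ℝ) (hg : Continuous g) (a t : ℝ) :
    HasDerivAt (fun x => ∫ s in a..x, g s) (g t) t :=
  intervalIntegral.integral_hasDerivAt_right (hg.intervalIntegrable a t)
    (hg.stronglyMeasurable.stronglyMeasurableAtFilter) hg.continuousAt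

theorem stmt1 (α l : ℝ) (hα0 : 0 < α) (hα1 : α < 1) (hl : l ≠ 1 / (1 - α))
    (f : ℝ → ℝ) (hf : ContinuousOn f (Set.Ici 0)) (hf0 : f 0 = 0)
    (u u' : ℝ → ℝ)
    (hu : ∀ t ∈ Set.Ici (0:ℝ), HasDerivAt u (u' t) t)
    (hu' : ContinuousOn u' (Set.Ici 0))
    (hu0 : u 0 = 0)
    (hueq : ∀ t : ℝ, 0 ≤ t → cfDeriv α u t - l * u t = f t) :
    ∀ t : ℝ, 0 ≤ t →
      u t = ((1 - α) / (1 - l * (1 - α))) * f t +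
        (α / (1 - l * (1 - α)) ^ 2) *
          ∫ ξ in (0:ℝ)..t, f ξ * Real.exp ((l * α / (1 - l * (1 - α))) * (t - ξ)) := by
  have h1α : (0:ℝ) < 1 - α := by linarith
  have h1 : (1:ℝ) - α ≠ 0 := h1α.ne'
  set β : ℝ := α / (1 - α) with hβ
  set c : ℝ := 1 - l * (1 - α) with hcdef
  have hc : c ≠ 0 := by
    intro h
    rw [hcdef] at h
    apply hl
    rw [eq_div_iff h1]
    linarith
  set A : ℝ := (1 - α) / c with hA
  set B : ℝ := α / ((1 - α) * c) with hB
  have hβ1 : β * (1 - α) = α := by rw [hβ]; field_simp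
  have hBc : B * ((1 - α) * c) = α := by rw [hB]; field_simp
  have hAc : A * c = 1 - α := by rw [hA]; exact div_mul_cancel₀ _ hc
  have hαc : c * (α / c ^ 2) = β * A := by rw [hβ, hA]; field_simp
  have hnz : (1 - α) * c ≠ 0 := mul_ne_zero h1 hc
  -- continuity of u on Ici 0
  have hu_cont : ContinuousOn u (Set.Ici 0) := fun t ht =>
    (hu t ht).continuousAt.continuousWithinAt
  -- global continuous extensions
  set U : ℝ → ℝ := fun t => u (max t 0) with hU
  set F : ℝ → ℝ := fun t => f (max t 0) with hF
  have hmax : Continuous fun t : ℝ => max t 0 := continuous_id.max continuous_const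
  have hUc : Continuous U := hu_cont.comp_continuous hmax (fun x => Set.mem_Ici.mpr (le_max_right _ _))
  have hFc : Continuous F := hf.comp_continuous hmax (fun x => Set.mem_Ici.mpr (le_max_right _ _))
  have hUeq : ∀ s : ℝ, 0 ≤ s → U s = u s := fun s hs => by simp [hU, max_eq_left hs]
  have hFeq : ∀ s : ℝ, 0 ≤ s → F s = f s := fun s hs => by simp [hF, max_eq_left hs]
  -- G and K
  set G : ℝ → ℝ := fun t => ∫ s in (0:ℝ)..t, U s * Real.exp (β * s) with hG
  set K : ℝ → ℝ := fun t => ∫ ξ in (0:ℝ)..t, A * F ξ * Real.exp ((β - B) * ξ) with hK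
  have hGd : ∀ t : ℝ, HasDerivAt G (U t * Real.exp (β * t)) t := fun t =>
    ftc_aux _ (hUc.mul (Real.continuous_exp.comp (continuous_const.mul continuous_id))) 0 t
  have hKd : ∀ t : ℝ, HasDerivAt K (A * F t * Real.exp ((β - B) * t)) t := fun t =>
    ftc_aux _ (((continuous_const.mul hFc).mul
      (Real.continuous_exp.comp (continuous_const.mul continuous_id)))) 0 t
  -- key equation: for s ≥ 0, c * u s = (1-α) * f s + β * exp(-(β s)) * G s
  have key : ∀ s : ℝ, 0 ≤ s →
      c * u s = (1 - α) * f s + β * Real.exp (-(β * s)) * G s := by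
    intro s hs
    have hsub : Set.uIcc (0:ℝ) s ⊆ Set.Ici 0 := by
      rw [Set.uIcc_of_le hs]; exact fun x hx => hx.1
    have hexp : ∀ x ∈ Set.uIcc (0:ℝ) s,
        HasDerivAt (fun y => Real.exp (β * y)) (β * Real.exp (β * x)) x := by
      intro x _
      have h0 : HasDerivAt (fun y : ℝ => β * y) β x := by
        simpa using (hasDerivAt_id x).const_mul β
      simpa [mul_comm] using h0.exp
    have huu : ∀ x ∈ Set.uIcc (0:ℝ) s, HasDerivAt u (u' x) x := fun x hx => hu x (hsub hx)
    have hu'i : IntervalIntegrable u' volume 0 s := (hu'.mono hsub).intervalIntegrable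
    have hexpi : IntervalIntegrable (fun x => β * Real.exp (β * x)) volume 0 s :=
      (continuous_const.mul
        (Real.continuous_exp.comp (continuous_const.mul continuous_id))).intervalIntegrable 0 s
    have parts := intervalIntegral.integral_mul_deriv_eq_deriv_mul hexp huu hexpi hu'i
    have hderiv_eq : ∀ x ∈ Set.uIcc (0:ℝ) s, deriv u x * Real.exp (-β * (s - x))
        = Real.exp (-(β * s)) * (Real.exp (β * x) * u' x) := by
      intro x hx
      rw [(hu x (hsub hx)).deriv]
      have h : -β * (s - x) = -(β * s) + β * x := by ring
      rw [h, Real.exp_add]; ring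
    have hcf : cfDeriv α u s = (1 / (1 - α)) * (Real.exp (-(β * s)) *
        ∫ x in (0:ℝ)..s, Real.exp (β * x) * u' x) := by
      simp only [cfDeriv]
      rw [← hβ]
      congr 1
      rw [← intervalIntegral.integral_const_mul]
      exact intervalIntegral.integral_congr hderiv_eq
    have hGs : G s = ∫ x in (0:ℝ)..s, u x * Real.exp (β * x) := by
      apply intervalIntegral.integral_congr
      intro x hx
      simp only [hUeq x (hsub hx)]
    have hint2 : (∫ x in (0:ℝ)..s, β * Real.exp (β * x) * u x) = β * G s := by
      rw [hGs, ← intervalIntegral.integral_const_mul]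
      apply intervalIntegral.integral_congr
      intro x _
      simp only []
      ring
    have heq := hueq s hs
    rw [hcf, parts, hint2, hu0] at heq
    simp only [mul_zero, sub_zero] at heq
    have hEs : Real.exp (-(β * s)) * Real.exp (β * s) = 1 := by
      rw [← Real.exp_add]; simp
    have h1inv : (1 - α) * (1 / (1 - α)) = 1 := by field_simp
    linear_combination (1 - α) * heq
      - (Real.exp (-(β * s)) * (Real.exp (β * s) * u s - β * G s)) * h1inv
      - u s * hEs + u s * hcdef
  -- constancy: exp(-B t) * G t = K t for t ≥ 0
  have hconst : ∀ t : ℝ, 0 ≤ t → Real.exp (-(B * t)) * G t = K t := by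
    intro t ht
    set D : ℝ → ℝ := fun s => Real.exp (-(B * s)) * G s - K s with hD
    have hDd : ∀ s : ℝ, 0 ≤ s → HasDerivAt D 0 s := by
      intro s hs
      have h1d : HasDerivAt (fun y => Real.exp (-(B * y))) (-B * Real.exp (-(B * s))) s := by
        have h := (Real.hasDerivAt_exp (-(B * s))).comp s
          (((hasDerivAt_id s).const_mul B).neg)
        exact h.congr_deriv (by ring)
      have h2 := (h1d.mul (hGd s)).sub (hKd s)
      have hval : -B * Real.exp (-(B * s)) * G s
          + Real.exp (-(B * s)) * (U s * Real.exp (β * s))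
          - A * F s * Real.exp ((β - B) * s) = 0 := by
        rw [hUeq s hs, hFeq s hs]
        apply mul_left_cancel₀ hnz
        have hk := key s hs
        have hEs : Real.exp (-(β * s)) * Real.exp (β * s) = 1 := by
          rw [← Real.exp_add]; simp
        have hE23 : Real.exp (-(B * s)) * Real.exp (β * s) = Real.exp ((β - B) * s) := by
          rw [← Real.exp_add]; ring_nf
        linear_combination
          ((1 - α) * Real.exp (-(B * s)) * Real.exp (β * s)) * hk
          - (Real.exp (-(B * s)) * G s) * hBc
          - ((1 - α) * f s * Real.exp ((β - B) * s)) * hAc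
          + ((1 - α) ^ 2 * f s) * hE23
          + ((1 - α) * β * Real.exp (-(B * s)) * G s) * hEs
          + (Real.exp (-(B * s)) * G s) * hβ1
      rw [hval] at h2
      exact h2
    have hGcont : Continuous G := continuous_iff_continuousAt.mpr fun x => (hGd x).continuousAt
    have hKcont : Continuous K := continuous_iff_continuousAt.mpr fun x => (hKd x).continuousAt
    have hDcont : ContinuousOn D (Set.Icc 0 t) :=
      (((Real.continuous_exp.comp (continuous_const.mul continuous_id).neg).mul
        hGcont).sub hKcont).continuousOn
    have hcst := constant_of_has_deriv_right_zero hDcont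
      (fun x hx => (hDd x hx.1).hasDerivWithinAt) t (Set.right_mem_Icc.2 ht)
    have hD0 : D 0 = 0 := by
      simp [hD, hG, hK, intervalIntegral.integral_same]
    rw [hD0] at hcst
    simpa [hD, sub_eq_zero] using hcst
  -- final assembly
  intro t ht
  have hsub : Set.uIcc (0:ℝ) t ⊆ Set.Ici 0 := by
    rw [Set.uIcc_of_le ht]; exact fun x hx => hx.1
  set J : ℝ := ∫ ξ in (0:ℝ)..t, f ξ * Real.exp ((β - B) * ξ) with hJ
  have hKJ : K t = A * J := by
    rw [hK, hJ, ← intervalIntegral.integral_const_mul]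
    apply intervalIntegral.integral_congr
    intro ξ hξ
    simp only [hFeq ξ (hsub hξ)]
    ring
  have hGK : G t = Real.exp (B * t) * K t := by
    have h : G t = Real.exp (B * t) * (Real.exp (-(B * t)) * G t) := by
      rw [← mul_assoc, ← Real.exp_add]; simp
    rw [h, hconst t ht]
  have hI : (∫ ξ in (0:ℝ)..t, f ξ * Real.exp ((l * α / c) * (t - ξ)))
      = Real.exp ((B - β) * t) * J := by
    rw [hJ, ← intervalIntegral.integral_const_mul]
    apply intervalIntegral.integral_congr
    intro ξ hξ
    have hBβ : B - β = l * α / c := by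
      rw [hB, hβ, hcdef]
      have hc' : (1:ℝ) - l * (1 - α) ≠ 0 := hc
      rw [div_sub_div _ _ (mul_ne_zero h1 hc') h1,
        div_eq_div_iff (mul_ne_zero (mul_ne_zero h1 hc') h1) hc']
      ring
    have harg : l * α / c * (t - ξ) = (B - β) * t + (β - B) * ξ := by
      rw [← hBβ]; ring
    simp only []
    rw [harg, Real.exp_add]; ring
  have hE3 : Real.exp (B * t) * Real.exp (-(β * t)) = Real.exp ((B - β) * t) := by
    rw [← Real.exp_add]; ring_nf
  have hfin : c * u t = c * (A * f t + α / c ^ 2 *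
      ∫ ξ in (0:ℝ)..t, f ξ * Real.exp ((l * α / c) * (t - ξ))) := by
    have hk := key t ht
    linear_combination hk - f t * hAc
      - (∫ ξ in (0:ℝ)..t, f ξ * Real.exp ((l * α / c) * (t - ξ))) * hαc
      + (β * Real.exp (-(β * t))) * hGK
      + (β * K t) * hE3
      + (β * Real.exp ((B - β) * t)) * hKJ
      - (β * A) * hI
  exact mul_left_cancel₀ hc hfin
end

section
/- Let 0 < α < 1, let λ = 1/(1-α), and let f : [0,∞) → ℝ be continuously differentiable with f(0) = 0 and f′(0) = 0. If u is continuously differentiable on [0,∞), satisfies u(0) = 0, and satisfies (_CF D₀ᵗ^α u)(t) − λ·u(t) = f(t) for all t ≥ 0, then u(t) = −(1-α)·f(t) − ((1-α)²/α)·f′(t) for all t ≥ 0; in particular the solution of this initial value problem is unique. -/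
theorem stmt3 (α l : ℝ) (hα0 : 0 < α) (hα1 : α < 1) (hl : l = 1 / (1 - α))
    (f f' : ℝ → ℝ)
    (hf : ∀ t ∈ Set.Ici (0:ℝ), HasDerivAt f (f' t) t)
    (hf' : ContinuousOn f' (Set.Ici 0))
    (hf0 : f 0 = 0) (hf'0 : f' 0 = 0)
    (u u' : ℝ → ℝ)
    (hu : ∀ t ∈ Set.Ici (0:ℝ), HasDerivAt u (u' t) t)
    (hu' : ContinuousOn u' (Set.Ici 0))
    (hu0 : u 0 = 0)
    (hueq : ∀ t : ℝ, 0 ≤ t → cfDeriv α u t - l * u t = f t) :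
    ∀ t : ℝ, 0 ≤ t → u t = -(1 - α) * f t - ((1 - α) ^ 2 / α) * f' t := by
  have hβ : (0:ℝ) < 1 - α := by linarith
  set k : ℝ := α / (1 - α) with hk
  have hkpos : 0 < k := div_pos hα0 hβ
  set g : ℝ → ℝ := fun s => u' (max s 0) * Real.exp (k * s) with hg
  have hgc : Continuous g := by
    apply Continuous.mul
    · exact hu'.comp_continuous (continuous_id.max continuous_const)
        (fun x => Set.mem_Ici.mpr (le_max_right _ _))
    · exact Real.continuous_exp.comp (continuous_const.mul continuous_id)
  set J : ℝ → ℝ := fun t => ∫ s in (0:ℝ)..t, g s with hJdef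
  have hJ : ∀ t : ℝ, HasDerivAt J (g t) t := fun t =>
    intervalIntegral.integral_hasDerivAt_right (hgc.intervalIntegrable 0 t)
      (hgc.stronglyMeasurable.stronglyMeasurableAtFilter) hgc.continuousAt
  have hA : ∀ t : ℝ, 0 ≤ t → cfDeriv α u t = l * Real.exp (-(k*t)) * J t := by
    intro t ht
    have hcong : Set.EqOn (fun s => deriv u s * Real.exp (-(α/(1-α)) * (t - s)))
        (fun s => Real.exp (-(k*t)) * g s) (Set.uIcc 0 t) := by
      intro s hs
      rw [Set.uIcc_of_le ht] at hs
      have hs0 : (0:ℝ) ≤ s := hs.1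
      simp only [hg, max_eq_left hs0, (hu s hs0).deriv, ← hk]
      rw [show -k * (t - s) = -(k*t) + k*s by ring, Real.exp_add]
      ring
    unfold cfDeriv
    rw [intervalIntegral.integral_congr hcong, intervalIntegral.integral_const_mul, hl]
    ring
  have hzero : ∀ τ ∈ Set.Ici (0:ℝ),
      l * J τ - l * (Real.exp (k*τ) * u τ) - Real.exp (k*τ) * f τ = 0 := by
    intro τ hτ
    have h1 := hueq τ hτ
    rw [hA τ hτ] at h1
    have he' : Real.exp (-(k*τ)) * Real.exp (k*τ) = 1 := by
      rw [← Real.exp_add]; simp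
    linear_combination Real.exp (k*τ) * h1 - l * J τ * he'
  have hexp : ∀ τ : ℝ, HasDerivAt (fun x => Real.exp (k*x)) (k * Real.exp (k*τ)) τ := by
    intro τ
    have h := ((hasDerivAt_id τ).const_mul k).exp
    simp only [id_eq] at h
    convert h using 1
    ring
  intro t ht
  set e := Real.exp (k * t) with he
  have hD : HasDerivWithinAt (fun τ => l * J τ - l * (Real.exp (k*τ) * u τ) - Real.exp (k*τ) * f τ)
      (l * g t - l * (k * e * u t + e * u' t) - (k * e * f t + e * f' t)) (Set.Ici 0) t := by
    have h1 := (hJ t).const_mul l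
    have h2 := ((hexp t).mul (hu t ht)).const_mul l
    have h3 := (hexp t).mul (hf t ht)
    exact ((h1.sub h2).sub h3).hasDerivWithinAt
  have hD0 : HasDerivWithinAt (fun τ => l * J τ - l * (Real.exp (k*τ) * u τ) - Real.exp (k*τ) * f τ)
      0 (Set.Ici 0) t :=
    (hasDerivWithinAt_const t _ (0:ℝ)).congr hzero (hzero t ht)
  have hud : UniqueDiffWithinAt ℝ (Set.Ici (0:ℝ)) t := (uniqueDiffOn_Ici 0) t ht
  have hDeq : l * g t - l * (k * e * u t + e * u' t) - (k * e * f t + e * f' t) = 0 :=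
    (hD.derivWithin hud).symm.trans (hD0.derivWithin hud)
  have hgt : g t = u' t * e := by simp [hg, max_eq_left ht, he]
  rw [hgt] at hDeq
  have hne : e ≠ 0 := ne_of_gt (Real.exp_pos _)
  have hαne : α ≠ 0 := ne_of_gt hα0
  have hβne : (1:ℝ) - α ≠ 0 := ne_of_gt hβ
  rw [hl, hk] at hDeq
  field_simp at hDeq
  have hX : α * u t + α*(1-α)*f t + (1-α)^2 * f' t = 0 := by
    have h2 : ((1-α)^2 * e) * (α * u t + α*(1-α)*f t + (1-α)^2 * f' t) = 0 := by
      linear_combination -(1-α)^2 * hDeq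
    exact (mul_eq_zero.mp h2).resolve_left (mul_ne_zero (pow_ne_zero 2 hβne) hne)
  field_simp
  linear_combination hX
end

section
/- For each positive integer k let λ_k = 2kπ, and consider the two systems of functions on [0,1]: X = {1} ∪ {cos(λ_k x) : k ≥ 1} ∪ {x·sin(λ_k x) : k ≥ 1} and Y = {2(1−x)} ∪ {4(1−x)·cos(λ_k x) : k ≥ 1} ∪ {4·sin(λ_k x) : k ≥ 1}. Then X and Y are biorthogonal in L²[0,1]: ∫₀¹ 1·2(1−x) dx = 1; for all k, m ≥ 1, ∫₀¹ cos(λ_k x)·4(1−x)cos(λ_m x) dx = δ_{km} and ∫₀¹ x·sin(λ_k x)·4·sin(λ_m x) dx = δ_{km}; and all the remaining cross pairings have vanishing integral, i.e. ∫₀¹ 1·4(1−x)cos(λ_m x) dx = 0, ∫₀¹ 1·4 sin(λ_m x) dx = 0, ∫₀¹ cos(λ_k x)·2(1−x) dx = 0, ∫₀¹ cos(λ_k x)·4 sin(λ_m x) dx = 0, ∫₀¹ x sin(λ_k x)·2(1−x) dx = 0, and ∫₀¹ x sin(λ_k x)·4(1−x)cos(λ_m x) dx = 0. -/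
open Real

private lemma derivCos (c : ℝ) (x : ℝ) :
    HasDerivAt (fun y => Real.cos (c*y)) (-(c * Real.sin (c*x))) x := by
  have hid : HasDerivAt (fun y : ℝ => c*y) c x := by simpa using (hasDerivAt_id x).const_mul c
  simpa [mul_comm, Function.comp_def] using (Real.hasDerivAt_cos (c*x)).comp x hid

private lemma derivSin (c : ℝ) (x : ℝ) :
    HasDerivAt (fun y => Real.sin (c*y)) (c * Real.cos (c*x)) x := by
  have hid : HasDerivAt (fun y : ℝ => c*y) c x := by simpa using (hasDerivAt_id x).const_mul c
  simpa [mul_comm, Function.comp_def] using (Real.hasDerivAt_sin (c*x)).comp x hid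

private lemma intB (c : ℝ) (h1 : Real.cos c = 1) : (∫ x in (0:ℝ)..1, Real.sin (c*x)) = 0 := by
  rcases eq_or_ne c 0 with rfl | hc
  · simp
  · rw [intervalIntegral.integral_comp_mul_left Real.sin hc]
    simp [integral_sin, h1]

private lemma intC (c : ℝ) (hc : c ≠ 0) (h1 : Real.cos c = 1) (h2 : Real.sin c = 0) :
    (∫ x in (0:ℝ)..1, (1-x) * Real.cos (c*x)) = 0 := by
  have key : ∀ x ∈ Set.uIcc (0:ℝ) 1, HasDerivAt
      (fun y => (1-y) * Real.sin (c*y)/c - Real.cos (c*y)/c^2) ((1-x) * Real.cos (c*x)) x := by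
    intro x _
    have h := (((hasDerivAt_const x (1:ℝ)).sub (hasDerivAt_id x)).mul (derivSin c x)).div_const c
      |>.sub ((derivCos c x).div_const (c^2))
    refine h.congr_deriv ?_
    simp only [Pi.sub_apply, id]
    field_simp
    ring
  rw [intervalIntegral.integral_eq_sub_of_hasDerivAt key
    (by apply Continuous.intervalIntegrable; fun_prop)]
  simp [h1, h2]

private lemma intD (c : ℝ) (hc : c ≠ 0) (h1 : Real.cos c = 1) (h2 : Real.sin c = 0) :
    (∫ x in (0:ℝ)..1, x * Real.cos (c*x)) = 0 := by
  have key : ∀ x ∈ Set.uIcc (0:ℝ) 1, HasDerivAt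
      (fun y => y * Real.sin (c*y)/c + Real.cos (c*y)/c^2) (x * Real.cos (c*x)) x := by
    intro x _
    have h := (((hasDerivAt_id x).mul (derivSin c x)).div_const c).add
      ((derivCos c x).div_const (c^2))
    refine h.congr_deriv ?_
    simp only [Pi.sub_apply, id]
    field_simp
    ring
  rw [intervalIntegral.integral_eq_sub_of_hasDerivAt key
    (by apply Continuous.intervalIntegrable; fun_prop)]
  simp [h1, h2]

private lemma intG (c : ℝ) (h1 : Real.cos c = 1) (h2 : Real.sin c = 0) :
    (∫ x in (0:ℝ)..1, (x - x^2) * Real.sin (c*x)) = 0 := by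
  rcases eq_or_ne c 0 with rfl | hc
  · simp
  have key : ∀ x ∈ Set.uIcc (0:ℝ) 1, HasDerivAt
      (fun y => (y^2 - y) * Real.cos (c*y)/c + (1 - 2*y) * Real.sin (c*y)/c^2
        - 2 * Real.cos (c*y)/c^3) ((x - x^2) * Real.sin (c*x)) x := by
    intro x _
    have hA : HasDerivAt (fun y : ℝ => y^2 - y) (2*x - 1) x := by
      exact ((hasDerivAt_pow 2 x).sub (hasDerivAt_id x)).congr_deriv (by norm_num)
    have hB : HasDerivAt (fun y : ℝ => 1 - 2*y) (-2 : ℝ) x := by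
      exact ((hasDerivAt_const x (1:ℝ)).sub ((hasDerivAt_id x).const_mul 2)).congr_deriv (by norm_num)
    have h := (((hA.mul (derivCos c x)).div_const c).add
        ((hB.mul (derivSin c x)).div_const (c^2))).sub
      (((derivCos c x).const_mul 2).div_const (c^3))
    refine h.congr_deriv ?_
    field_simp
    ring
  rw [intervalIntegral.integral_eq_sub_of_hasDerivAt key
    (by apply Continuous.intervalIntegrable; fun_prop)]
  simp [h1, h2]

private lemma ccos (n : ℤ) : Real.cos (2*(n:ℝ)*π) = 1 := by
  rw [show (2*(n:ℝ)*π) = n*(2*π) by ring, Real.cos_int_mul_two_pi]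

private lemma csin (n : ℤ) : Real.sin (2*(n:ℝ)*π) = 0 := by
  rw [show (2*(n:ℝ)*π) = ((2*n : ℤ):ℝ)*π by push_cast; ring, Real.sin_int_mul_pi]

private lemma combo (f g : ℝ → ℝ) (hf : Continuous f) (hg : Continuous g) (u v : ℝ) :
    (∫ x in (0:ℝ)..1, (u * f x + v * g x)) =
      u * (∫ x in (0:ℝ)..1, f x) + v * (∫ x in (0:ℝ)..1, g x) := by
  rw [intervalIntegral.integral_add ((by fun_prop : Continuous (fun x => u * f x)).intervalIntegrable _ _)
      ((by fun_prop : Continuous (fun x => v * g x)).intervalIntegrable _ _),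
    intervalIntegral.integral_const_mul, intervalIntegral.integral_const_mul]

theorem stmt16 (k m : ℕ) (hk : 1 ≤ k) (hm : 1 ≤ m) :
    (∫ x in (0:ℝ)..1, (1 : ℝ) * (2 * (1 - x))) = 1 ∧
    (∫ x in (0:ℝ)..1,
        Real.cos (2 * (k : ℝ) * π * x) * (4 * (1 - x) * Real.cos (2 * (m : ℝ) * π * x))) =
      (if k = m then 1 else 0) ∧
    (∫ x in (0:ℝ)..1,
        x * Real.sin (2 * (k : ℝ) * π * x) * (4 * Real.sin (2 * (m : ℝ) * π * x))) =
      (if k = m then 1 else 0) ∧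
    (∫ x in (0:ℝ)..1, (1 : ℝ) * (4 * (1 - x) * Real.cos (2 * (m : ℝ) * π * x))) = 0 ∧
    (∫ x in (0:ℝ)..1, (1 : ℝ) * (4 * Real.sin (2 * (m : ℝ) * π * x))) = 0 ∧
    (∫ x in (0:ℝ)..1, Real.cos (2 * (k : ℝ) * π * x) * (2 * (1 - x))) = 0 ∧
    (∫ x in (0:ℝ)..1,
        Real.cos (2 * (k : ℝ) * π * x) * (4 * Real.sin (2 * (m : ℝ) * π * x))) = 0 ∧
    (∫ x in (0:ℝ)..1, x * Real.sin (2 * (k : ℝ) * π * x) * (2 * (1 - x))) = 0 ∧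
    (∫ x in (0:ℝ)..1,
        x * Real.sin (2 * (k : ℝ) * π * x) * (4 * (1 - x) * Real.cos (2 * (m : ℝ) * π * x))) = 0 := by
  have hkR : (0:ℝ) < (k:ℝ) := by exact_mod_cast hk
  have hmR : (0:ℝ) < (m:ℝ) := by exact_mod_cast hm
  have hacos : Real.cos (2*(k:ℝ)*π) = 1 := by exact_mod_cast ccos (k:ℤ)
  have hasin : Real.sin (2*(k:ℝ)*π) = 0 := by exact_mod_cast csin (k:ℤ)
  have hbcos : Real.cos (2*(m:ℝ)*π) = 1 := by exact_mod_cast ccos (m:ℤ)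
  have hbsin : Real.sin (2*(m:ℝ)*π) = 0 := by exact_mod_cast csin (m:ℤ)
  have hpcos : Real.cos (2*((k:ℝ)+(m:ℝ))*π) = 1 := by exact_mod_cast ccos ((k:ℤ)+(m:ℤ))
  have hpsin : Real.sin (2*((k:ℝ)+(m:ℝ))*π) = 0 := by exact_mod_cast csin ((k:ℤ)+(m:ℤ))
  have hdcos : Real.cos (2*((k:ℝ)-(m:ℝ))*π) = 1 := by exact_mod_cast ccos ((k:ℤ)-(m:ℤ))
  have hdsin : Real.sin (2*((k:ℝ)-(m:ℝ))*π) = 0 := by exact_mod_cast csin ((k:ℤ)-(m:ℤ))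
  have hane : (2*(k:ℝ)*π) ≠ 0 := by positivity
  have hbne : (2*(m:ℝ)*π) ≠ 0 := by positivity
  have hpne : (2*((k:ℝ)+(m:ℝ))*π) ≠ 0 := by positivity
  have h2ane : (2*((k:ℝ)+(k:ℝ))*π) ≠ 0 := by positivity
  have h2acos : Real.cos (2*((k:ℝ)+(k:ℝ))*π) = 1 := by exact_mod_cast ccos ((k:ℤ)+(k:ℤ))
  have h2asin : Real.sin (2*((k:ℝ)+(k:ℝ))*π) = 0 := by exact_mod_cast csin ((k:ℤ)+(k:ℤ))
  have int1mx : (∫ x in (0:ℝ)..1, ((1:ℝ)-x)) = 1/2 := by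
    calc (∫ x in (0:ℝ)..1, ((1:ℝ)-x))
        = ∫ x in (0:ℝ)..1, (1 * (1:ℝ) + (-1) * x) :=
          intervalIntegral.integral_congr (fun x _ => by ring)
      _ = 1 * (∫ x in (0:ℝ)..1, (1:ℝ)) + (-1) * (∫ x in (0:ℝ)..1, x) :=
          combo _ _ (by fun_prop) (by fun_prop) 1 (-1)
      _ = 1/2 := by rw [integral_id]; simp; norm_num
  refine ⟨?_, ?_, ?_, ?_, ?_, ?_, ?_, ?_, ?_⟩
  · -- item 1
    calc (∫ x in (0:ℝ)..1, (1:ℝ) * (2 * (1 - x)))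
        = ∫ x in (0:ℝ)..1, (2 * ((1:ℝ)-x) + 0 * x) := by
          apply intervalIntegral.integral_congr; intro x _; dsimp only; ring
      _ = 2 * (∫ x in (0:ℝ)..1, ((1:ℝ)-x)) + 0 * (∫ x in (0:ℝ)..1, x) :=
          combo _ _ (by fun_prop) (by fun_prop) 2 0
      _ = 1 := by rw [int1mx]; ring
  · -- item 2
    by_cases h : k = m
    · subst h
      simp only [if_pos rfl]
      calc (∫ x in (0:ℝ)..1,
            Real.cos (2*(k:ℝ)*π*x) * (4 * (1 - x) * Real.cos (2*(k:ℝ)*π*x)))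
          = ∫ x in (0:ℝ)..1, (2 * ((1:ℝ)-x) + 2 * (((1:ℝ)-x) * Real.cos ((2*((k:ℝ)+(k:ℝ))*π)*x))) := by
            apply intervalIntegral.integral_congr; intro x _
            dsimp only
            rw [show (2*((k:ℝ)+(k:ℝ))*π)*x = 2*(2*(k:ℝ)*π*x) by ring, Real.cos_two_mul]
            ring
        _ = 2 * (∫ x in (0:ℝ)..1, ((1:ℝ)-x))
            + 2 * (∫ x in (0:ℝ)..1, ((1:ℝ)-x) * Real.cos ((2*((k:ℝ)+(k:ℝ))*π)*x)) :=
            combo _ _ (by fun_prop) (by fun_prop) 2 2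
        _ = 1 := by rw [int1mx, intC _ h2ane h2acos h2asin]; ring
    · have hdne : (2*((k:ℝ)-(m:ℝ))*π) ≠ 0 := by
        have : (k:ℝ) ≠ (m:ℝ) := by exact_mod_cast h
        exact mul_ne_zero (mul_ne_zero two_ne_zero (sub_ne_zero.mpr this)) pi_ne_zero
      simp only [if_neg h]
      calc (∫ x in (0:ℝ)..1,
            Real.cos (2*(k:ℝ)*π*x) * (4 * (1 - x) * Real.cos (2*(m:ℝ)*π*x)))
          = ∫ x in (0:ℝ)..1, (2 * (((1:ℝ)-x) * Real.cos ((2*((k:ℝ)-(m:ℝ))*π)*x))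
              + 2 * (((1:ℝ)-x) * Real.cos ((2*((k:ℝ)+(m:ℝ))*π)*x))) := by
            apply intervalIntegral.integral_congr; intro x _
            dsimp only
            rw [show (2*((k:ℝ)-(m:ℝ))*π)*x = 2*(k:ℝ)*π*x - 2*(m:ℝ)*π*x by ring,
              show (2*((k:ℝ)+(m:ℝ))*π)*x = 2*(k:ℝ)*π*x + 2*(m:ℝ)*π*x by ring,
              Real.cos_sub, Real.cos_add]
            ring
        _ = 2 * (∫ x in (0:ℝ)..1, ((1:ℝ)-x) * Real.cos ((2*((k:ℝ)-(m:ℝ))*π)*x))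
            + 2 * (∫ x in (0:ℝ)..1, ((1:ℝ)-x) * Real.cos ((2*((k:ℝ)+(m:ℝ))*π)*x)) :=
            combo _ _ (by fun_prop) (by fun_prop) 2 2
        _ = 0 := by rw [intC _ hdne hdcos hdsin, intC _ hpne hpcos hpsin]; ring
  · -- item 3
    by_cases h : k = m
    · subst h
      simp only [if_pos rfl]
      calc (∫ x in (0:ℝ)..1,
            x * Real.sin (2*(k:ℝ)*π*x) * (4 * Real.sin (2*(k:ℝ)*π*x)))
          = ∫ x in (0:ℝ)..1, (2 * x + (-2) * (x * Real.cos ((2*((k:ℝ)+(k:ℝ))*π)*x))) := by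
            apply intervalIntegral.integral_congr; intro x _
            dsimp only
            rw [show (2*((k:ℝ)+(k:ℝ))*π)*x = 2*(2*(k:ℝ)*π*x) by ring, Real.cos_two_mul]
            linear_combination (4*x) * Real.sin_sq_add_cos_sq (2*(k:ℝ)*π*x)
        _ = 2 * (∫ x in (0:ℝ)..1, x)
            + (-2) * (∫ x in (0:ℝ)..1, x * Real.cos ((2*((k:ℝ)+(k:ℝ))*π)*x)) :=
            combo _ _ (by fun_prop) (by fun_prop) 2 (-2)
        _ = 1 := by
            rw [integral_id, intD _ h2ane h2acos h2asin]; norm_num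
    · have hdne : (2*((k:ℝ)-(m:ℝ))*π) ≠ 0 := by
        have : (k:ℝ) ≠ (m:ℝ) := by exact_mod_cast h
        exact mul_ne_zero (mul_ne_zero two_ne_zero (sub_ne_zero.mpr this)) pi_ne_zero
      simp only [if_neg h]
      calc (∫ x in (0:ℝ)..1,
            x * Real.sin (2*(k:ℝ)*π*x) * (4 * Real.sin (2*(m:ℝ)*π*x)))
          = ∫ x in (0:ℝ)..1, (2 * (x * Real.cos ((2*((k:ℝ)-(m:ℝ))*π)*x))
              + (-2) * (x * Real.cos ((2*((k:ℝ)+(m:ℝ))*π)*x))) := by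
            apply intervalIntegral.integral_congr; intro x _
            dsimp only
            rw [show (2*((k:ℝ)-(m:ℝ))*π)*x = 2*(k:ℝ)*π*x - 2*(m:ℝ)*π*x by ring,
              show (2*((k:ℝ)+(m:ℝ))*π)*x = 2*(k:ℝ)*π*x + 2*(m:ℝ)*π*x by ring,
              Real.cos_sub, Real.cos_add]
            ring
        _ = 2 * (∫ x in (0:ℝ)..1, x * Real.cos ((2*((k:ℝ)-(m:ℝ))*π)*x))
            + (-2) * (∫ x in (0:ℝ)..1, x * Real.cos ((2*((k:ℝ)+(m:ℝ))*π)*x)) :=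
            combo _ _ (by fun_prop) (by fun_prop) 2 (-2)
        _ = 0 := by rw [intD _ hdne hdcos hdsin, intD _ hpne hpcos hpsin]; ring
  · -- item 4
    calc (∫ x in (0:ℝ)..1, (1:ℝ) * (4 * (1 - x) * Real.cos (2*(m:ℝ)*π*x)))
        = ∫ x in (0:ℝ)..1, (4 * (((1:ℝ)-x) * Real.cos ((2*(m:ℝ)*π)*x)) + 0 * x) := by
          apply intervalIntegral.integral_congr; intro x _; dsimp only; ring_nf
      _ = 4 * (∫ x in (0:ℝ)..1, ((1:ℝ)-x) * Real.cos ((2*(m:ℝ)*π)*x))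
          + 0 * (∫ x in (0:ℝ)..1, x) := combo _ _ (by fun_prop) (by fun_prop) 4 0
      _ = 0 := by rw [intC _ hbne hbcos hbsin]; ring
  · -- item 5
    calc (∫ x in (0:ℝ)..1, (1:ℝ) * (4 * Real.sin (2*(m:ℝ)*π*x)))
        = ∫ x in (0:ℝ)..1, (4 * Real.sin ((2*(m:ℝ)*π)*x) + 0 * x) := by
          apply intervalIntegral.integral_congr; intro x _; dsimp only; ring_nf
      _ = 4 * (∫ x in (0:ℝ)..1, Real.sin ((2*(m:ℝ)*π)*x))
          + 0 * (∫ x in (0:ℝ)..1, x) := combo _ _ (by fun_prop) (by fun_prop) 4 0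
      _ = 0 := by rw [intB _ hbcos]; ring
  · -- item 6
    calc (∫ x in (0:ℝ)..1, Real.cos (2*(k:ℝ)*π*x) * (2 * (1 - x)))
        = ∫ x in (0:ℝ)..1, (2 * (((1:ℝ)-x) * Real.cos ((2*(k:ℝ)*π)*x)) + 0 * x) := by
          apply intervalIntegral.integral_congr; intro x _; dsimp only; ring_nf
      _ = 2 * (∫ x in (0:ℝ)..1, ((1:ℝ)-x) * Real.cos ((2*(k:ℝ)*π)*x))
          + 0 * (∫ x in (0:ℝ)..1, x) := combo _ _ (by fun_prop) (by fun_prop) 2 0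
      _ = 0 := by rw [intC _ hane hacos hasin]; ring
  · -- item 7
    calc (∫ x in (0:ℝ)..1, Real.cos (2*(k:ℝ)*π*x) * (4 * Real.sin (2*(m:ℝ)*π*x)))
        = ∫ x in (0:ℝ)..1, (2 * Real.sin ((2*((k:ℝ)+(m:ℝ))*π)*x)
            + (-2) * Real.sin ((2*((k:ℝ)-(m:ℝ))*π)*x)) := by
          apply intervalIntegral.integral_congr; intro x _
          dsimp only
          rw [show (2*((k:ℝ)-(m:ℝ))*π)*x = 2*(k:ℝ)*π*x - 2*(m:ℝ)*π*x by ring,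
            show (2*((k:ℝ)+(m:ℝ))*π)*x = 2*(k:ℝ)*π*x + 2*(m:ℝ)*π*x by ring,
            Real.sin_sub, Real.sin_add]
          ring
      _ = 2 * (∫ x in (0:ℝ)..1, Real.sin ((2*((k:ℝ)+(m:ℝ))*π)*x))
          + (-2) * (∫ x in (0:ℝ)..1, Real.sin ((2*((k:ℝ)-(m:ℝ))*π)*x)) :=
          combo _ _ (by fun_prop) (by fun_prop) 2 (-2)
      _ = 0 := by rw [intB _ hpcos, intB _ hdcos]; ring
  · -- item 8
    calc (∫ x in (0:ℝ)..1, x * Real.sin (2*(k:ℝ)*π*x) * (2 * (1 - x)))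
        = ∫ x in (0:ℝ)..1, (2 * ((x - x^2) * Real.sin ((2*(k:ℝ)*π)*x)) + 0 * x) := by
          apply intervalIntegral.integral_congr; intro x _; dsimp only; ring_nf
      _ = 2 * (∫ x in (0:ℝ)..1, (x - x^2) * Real.sin ((2*(k:ℝ)*π)*x))
          + 0 * (∫ x in (0:ℝ)..1, x) := combo _ _ (by fun_prop) (by fun_prop) 2 0
      _ = 0 := by rw [intG _ hacos hasin]; ring
  · -- item 9
    calc (∫ x in (0:ℝ)..1,
          x * Real.sin (2*(k:ℝ)*π*x) * (4 * (1 - x) * Real.cos (2*(m:ℝ)*π*x)))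
        = ∫ x in (0:ℝ)..1, (2 * ((x - x^2) * Real.sin ((2*((k:ℝ)+(m:ℝ))*π)*x))
            + 2 * ((x - x^2) * Real.sin ((2*((k:ℝ)-(m:ℝ))*π)*x))) := by
          apply intervalIntegral.integral_congr; intro x _
          dsimp only
          rw [show (2*((k:ℝ)-(m:ℝ))*π)*x = 2*(k:ℝ)*π*x - 2*(m:ℝ)*π*x by ring,
            show (2*((k:ℝ)+(m:ℝ))*π)*x = 2*(k:ℝ)*π*x + 2*(m:ℝ)*π*x by ring,
            Real.sin_sub, Real.sin_add]
          ring
      _ = 2 * (∫ x in (0:ℝ)..1, (x - x^2) * Real.sin ((2*((k:ℝ)+(m:ℝ))*π)*x))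
          + 2 * (∫ x in (0:ℝ)..1, (x - x^2) * Real.sin ((2*((k:ℝ)-(m:ℝ))*π)*x)) :=
          combo _ _ (by fun_prop) (by fun_prop) 2 2
      _ = 0 := by rw [intG _ hpcos hpsin, intG _ hdcos hdsin]; ring
end
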